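/- Let b_N satisfy b_0 = 1 and the recursion arising from splitting at the triangle containing the top edge in a 3-colored polygon (so that the generating functions B_0 = Σ_{n≥1} b_{3n}x^n, B_1 = Σ_{n≥0} b_{3n+1}x^n, B_2 = Σ_{n≥0} b_{3n+2}x^n satisfy the system forced by properness). Then b_{3n} = (1/(3n+1))·C(4n,n), i.e., b_{3n} equals the 4-Catalan number C_{n,4}. -/

import Mathlib

open PowerSeries

/-- The k-Catalan number `C_{n,k} = (1/((k-1)n+1))·binom(kn,n)`, as a rational number. -/
def kCatalan (n k : ℕ) : ℚ := (1 / ((k - 1 : ℚ) * n + 1)) * Nat.choose (k * n) n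

theorem stmt9 (b : ℕ → ℕ) (hb0 : b 0 = 1)
    (B₀ B₁ B₂ : PowerSeries ℚ)
    (hB₀ : ∀ n : ℕ, 1 ≤ n → coeff n B₀ = b (3 * n)) (hB₀c : constantCoeff B₀ = 0)
    (hB₁ : ∀ n : ℕ, coeff n B₁ = b (3 * n + 1))
    (hB₂ : ∀ n : ℕ, coeff n B₂ = b (3 * n + 2))
    -- the system of functional equations forced by properness of the triangulations
    (h0 : B₀ = X * B₁ ^ 2) (h1 : B₁ = (1 + B₀) ^ 2) (h2 : B₂ = (1 + B₀) ^ 3) :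
    ∀ n : ℕ, (b (3 * n) : ℚ) = 1 / (3 * (n : ℚ) + 1) * Nat.choose (4 * n) n ∧
      (b (3 * n) : ℚ) = kCatalan n 4 := by
  classical
  set A : ℚ⟦X⟧ := 1 + B₀ with hAdef
  have hR : A = 1 + X * A ^ 4 := by
    have h : B₀ = X * (1 + B₀) ^ 4 := by nth_rewrite 1 [h0]; rw [h1]; ring
    rw [hAdef]; linear_combination h
  set A1 : ℚ⟦X⟧ := d⁄dX ℚ A with hA1def
  set A2 : ℚ⟦X⟧ := d⁄dX ℚ A1 with hA2def
  set A3 : ℚ⟦X⟧ := d⁄dX ℚ A2 with hA3def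
  have h4 : (d⁄dX ℚ) (4 : ℚ⟦X⟧) = 0 := by
    rw [(by norm_num : (4:ℚ⟦X⟧) = ((4:ℕ):ℚ⟦X⟧)), Derivation.map_natCast]
  have h8 : (d⁄dX ℚ) (8 : ℚ⟦X⟧) = 0 := by
    rw [(by norm_num : (8:ℚ⟦X⟧) = ((8:ℕ):ℚ⟦X⟧)), Derivation.map_natCast]
  have h12 : (d⁄dX ℚ) (12 : ℚ⟦X⟧) = 0 := by
    rw [(by norm_num : (12:ℚ⟦X⟧) = ((12:ℕ):ℚ⟦X⟧)), Derivation.map_natCast]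
  have hI1 : A1 = A ^ 4 + 4 * X * A ^ 3 * A1 := by
    have h := congrArg (d⁄dX ℚ) hR
    simp only [Derivation.leibniz, Derivation.leibniz_pow, map_add, Derivation.map_one_eq_zero,
      derivative_X, smul_eq_mul, nsmul_eq_mul, h4, ← hA1def] at h
    push_cast at h
    linear_combination h
  have hI2 : A2 = 8*A^3*A1 + 12*X*A^2*A1^2 + 4*X*A^3*A2 := by
    have h := congrArg (d⁄dX ℚ) hI1
    simp only [Derivation.leibniz, Derivation.leibniz_pow, map_add, Derivation.map_one_eq_zero,
      derivative_X, smul_eq_mul, nsmul_eq_mul, h4, ← hA1def, ← hA2def] at h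
    push_cast at h
    linear_combination h
  have hI3 : A3 = 36*A^2*A1^2 + 12*A^3*A2 + 24*X*A*A1^3 + 36*X*A^2*A1*A2 + 4*X*A^3*A3 := by
    have h := congrArg (d⁄dX ℚ) hI2
    simp only [Derivation.leibniz, Derivation.leibniz_pow, map_add, Derivation.map_one_eq_zero,
      derivative_X, smul_eq_mul, nsmul_eq_mul, h4, h8, h12, ← hA1def, ← hA2def, ← hA3def] at h
    push_cast at h
    linear_combination h
  -- the inverse of 1 - 4*X*A^3
  set V : ℚ⟦X⟧ := (1 - 4*X*A^3)⁻¹ with hVdef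
  have hE : (1 - 4*X*A^3) * V = 1 := by
    apply PowerSeries.mul_inv_cancel
    simp [map_sub, map_mul, map_pow, constantCoeff_X]
  have hJ1 : A1 = A^4*V := by linear_combination V*hI1 - A1*hE
  have hJ2 : A2 = (8*A^3*A1 + 12*X*A^2*A1^2)*V := by linear_combination V*hI2 - A2*hE
  have hJ3 : A3 = (36*A^2*A1^2 + 12*A^3*A2 + 24*X*A*A1^3 + 36*X*A^2*A1*A2)*V := by
    linear_combination V*hI3 - A3*hE
  -- the third order linear ODE
  have hT : X^1 * ((24:ℚ) • A1) + X^2 * ((81:ℚ) • A2) + X^3 * ((27:ℚ) • A3)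
      = X^2 * ((816:ℚ) • A1) + X^3 * ((1152:ℚ) • A2) + X^4 * ((256:ℚ) • A3)
        + X^1 * ((24:ℚ) • A) := by
    simp only [smul_eq_C_mul, map_ofNat]
    linear_combination ((27:ℚ⟦X⟧)*X^3 + (-256:ℚ⟦X⟧)*X^4) * hJ3 + ((81:ℚ⟦X⟧)*X^2 + (-1152:ℚ⟦X⟧)*X^3 + (324:ℚ⟦X⟧)*X^3*A^3*V + (972:ℚ⟦X⟧)*X^4*A^2*A1*V + (-3072:ℚ⟦X⟧)*X^4*A^3*V + (-9216:ℚ⟦X⟧)*X^5*A^2*A1*V) * hJ2 + ((24:ℚ⟦X⟧)*X + (-816:ℚ⟦X⟧)*X^2 + (648:ℚ⟦X⟧)*X^2*A^3*V + (1944:ℚ⟦X⟧)*X^3*A^2*A1*V + (-9216:ℚ⟦X⟧)*X^3*A^3*V + (4536:ℚ⟦X⟧)*X^3*A^6*V^2 + (648:ℚ⟦X⟧)*X^4*A*A1^2*V + (-23040:ℚ⟦X⟧)*X^4*A^2*A1*V + (12312:ℚ⟦X⟧)*X^4*A^5*A1*V^2 + (-47616:ℚ⟦X⟧)*X^4*A^6*V^2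 + (12312:ℚ⟦X⟧)*X^4*A^9*V^3 + (-6144:ℚ⟦X⟧)*X^5*A*A1^2*V + (11664:ℚ⟦X⟧)*X^5*A^4*A1^2*V^2 + (-116736:ℚ⟦X⟧)*X^5*A^5*A1*V^2 + (11664:ℚ⟦X⟧)*X^5*A^8*A1*V^3 + (-116736:ℚ⟦X⟧)*X^5*A^9*V^3 + (11664:ℚ⟦X⟧)*X^5*A^12*V^4 + (-110592:ℚ⟦X⟧)*X^6*A^4*A1^2*V^2 + (-110592:ℚ⟦X⟧)*X^6*A^8*A1*V^3 + (-110592:ℚ⟦X⟧)*X^6*A^12*V^4) * hJ1 + ((24:ℚ⟦X⟧)*X*A*V^5 + (24:ℚ⟦X⟧)*X*A^2*V^5 + (24:ℚ⟦X⟧)*X*A^3*V^5 + (336:ℚ⟦X⟧)*X^2*A^4*V^5 + (312:ℚ⟦X⟧)*X^2*A^5*V^5 + (288:ℚ⟦X⟧)*X^2*A^6*V^5 + (-336:ℚ⟦X⟧)*X^3*A^8*V^5 + (-648:ℚ⟦X⟧)*X^3*A^9*V^5 + (336:ℚ⟦X⟧)*X^4*A^12*V^5) * hR + ((24:ℚ⟦X⟧)*X*A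 + (24:ℚ⟦X⟧)*X*A*V + (24:ℚ⟦X⟧)*X*A*V^2 + (24:ℚ⟦X⟧)*X*A*V^3 + (24:ℚ⟦X⟧)*X*A*V^4 + (-24:ℚ⟦X⟧)*X*A^4*V + (-24:ℚ⟦X⟧)*X*A^4*V^2 + (-24:ℚ⟦X⟧)*X*A^4*V^3 + (-24:ℚ⟦X⟧)*X*A^4*V^4 + (720:ℚ⟦X⟧)*X^2*A^4*V + (624:ℚ⟦X⟧)*X^2*A^4*V^2 + (528:ℚ⟦X⟧)*X^2*A^4*V^3 + (432:ℚ⟦X⟧)*X^2*A^4*V^4 + (-552:ℚ⟦X⟧)*X^2*A^7*V^2 + (-456:ℚ⟦X⟧)*X^2*A^7*V^3 + (-360:ℚ⟦X⟧)*X^2*A^7*V^4 + (6336:ℚ⟦X⟧)*X^3*A^7*V^2 + (3840:ℚ⟦X⟧)*X^3*A^7*V^3 + (1728:ℚ⟦X⟧)*X^3*A^7*V^4 + (-2328:ℚ⟦X⟧)*X^3*A^10*V^3 + (-504:ℚ⟦X⟧)*X^3*A^10*V^4 + (22272:ℚ⟦X⟧)*X^4*A^10*V^3 + (6912:ℚ⟦X⟧)*X^4*A^10*V^4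 + (-3000:ℚ⟦X⟧)*X^4*A^13*V^4 + (27648:ℚ⟦X⟧)*X^5*A^13*V^4) * hE
  have hcD : ∀ n : ℕ, coeff n A1 = coeff (n+1) A * (n+1) := fun n => by
    rw [hA1def]; exact coeff_derivative A n
  have hcD2 : ∀ n : ℕ, coeff n A2 = coeff (n+1) A1 * (n+1) := fun n => by
    rw [hA2def]; exact coeff_derivative A1 n
  have hcD3 : ∀ n : ℕ, coeff n A3 = coeff (n+1) A2 * (n+1) := fun n => by
    rw [hA3def]; exact coeff_derivative A2 n
  have hrec : ∀ n : ℕ, 3*((n:ℚ)+1)*(3*n+2)*(3*n+4) * coeff (n+1) A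
      = (256*(n:ℚ)^3+384*n^2+176*n+24) * coeff n A := by
    have g1 : constantCoeff A1 = coeff 1 A := by
      rw [← coeff_zero_eq_constantCoeff, hcD]; norm_num
    have g2 : constantCoeff A2 = coeff 2 A * 2 := by
      rw [← coeff_zero_eq_constantCoeff, hcD2, hcD]; norm_num
    have g3 : constantCoeff A3 = coeff 3 A * 6 := by
      rw [← coeff_zero_eq_constantCoeff, hcD3, hcD2, hcD]; push_cast; ring
    intro n
    match n with
    | 0 =>
      have h := congrArg (coeff 1) hT
      simp only [map_add, map_smul, smul_eq_mul, coeff_X_pow_mul'] at h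
      norm_num [hcD, hcD2, hcD3, g1, g2, g3] at h
      push_cast
      simp only [coeff_zero_eq_constantCoeff]
      linear_combination (24:ℚ) * h
    | 1 =>
      have h := congrArg (coeff 2) hT
      simp only [map_add, map_smul, smul_eq_mul, coeff_X_pow_mul'] at h
      norm_num [hcD, hcD2, hcD3, g1, g2, g3] at h
      push_cast
      linear_combination h
    | 2 =>
      have h := congrArg (coeff 3) hT
      simp only [map_add, map_smul, smul_eq_mul, coeff_X_pow_mul'] at h
      norm_num [hcD, hcD2, hcD3, g1, g2, g3] at h
      push_cast
      linear_combination h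
    | (m+3) =>
      have k1 : ∀ (f:ℚ⟦X⟧), coeff (m+4) (X^1*f) = coeff (m+3) f := by
        intro f; have := coeff_X_pow_mul f 1 (m+3); rwa [show m+3+1 = m+4 by omega] at this
      have k2 : ∀ (f:ℚ⟦X⟧), coeff (m+4) (X^2*f) = coeff (m+2) f := by
        intro f; have := coeff_X_pow_mul f 2 (m+2); rwa [show m+2+2 = m+4 by omega] at this
      have k3 : ∀ (f:ℚ⟦X⟧), coeff (m+4) (X^3*f) = coeff (m+1) f := by
        intro f; have := coeff_X_pow_mul f 3 (m+1); rwa [show m+1+3 = m+4 by omega] at this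
      have k4 : ∀ (f:ℚ⟦X⟧), coeff (m+4) (X^4*f) = coeff m f := by
        intro f; have := coeff_X_pow_mul f 4 m; rwa [show m+4 = m+4 by omega] at this
      have h := congrArg (coeff (m+4)) hT
      simp only [map_add, map_smul, smul_eq_mul, k1, k2, k3, k4] at h
      simp only [hcD, hcD2, hcD3] at h
      push_cast at h ⊢
      ring_nf at h ⊢
      linear_combination h
  have hc0 : coeff 0 A = 1 := by
    rw [hAdef]
    simp [coeff_zero_eq_constantCoeff, map_add, hB₀c]
  have hc : ∀ n : ℕ, coeff n A = 1 / (3 * (n : ℚ) + 1) * Nat.choose (4 * n) n := by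
    intro n
    induction n with
    | zero => simpa using hc0
    | succ n ih =>
      have hne1 : (3*(n:ℚ)+1) ≠ 0 := by positivity
      have hne4 : (3*(n:ℚ)+4) ≠ 0 := by positivity
      have hnen : ((n:ℚ)+1) ≠ 0 := by positivity
      have hbin : ((n:ℚ)+1)*(3*n+1)*(3*n+2)*(3*n+3) * (Nat.choose (4*n+4) (n+1) : ℚ)
          = (4*(n:ℚ)+1)*(4*n+2)*(4*n+3)*(4*n+4) * (Nat.choose (4*n) n : ℚ) := by
        have e1 := Nat.add_one_mul_choose_eq (4*n) n
        have e2 := Nat.choose_mul_succ_eq (4*n+1) (n+1)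
        have e3 := Nat.choose_mul_succ_eq (4*n+2) (n+1)
        have e4 := Nat.choose_mul_succ_eq (4*n+3) (n+1)
        rw [show 4*n+1+1-(n+1) = 3*n+1 by omega, show 4*n+1+1 = 4*n+2 by omega] at e2
        rw [show 4*n+2+1-(n+1) = 3*n+2 by omega, show 4*n+2+1 = 4*n+3 by omega] at e3
        rw [show 4*n+3+1-(n+1) = 3*n+3 by omega, show 4*n+3+1 = 4*n+4 by omega] at e4
        have f1 : (4*(n:ℚ)+1) * (Nat.choose (4*n) n : ℚ)
            = (Nat.choose (4*n+1) (n+1) : ℚ) * ((n:ℚ)+1) := by exact_mod_cast congrArg Nat.cast e1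
        have f2 : (Nat.choose (4*n+1) (n+1) : ℚ) * (4*(n:ℚ)+2)
            = (Nat.choose (4*n+2) (n+1) : ℚ) * (3*(n:ℚ)+1) := by exact_mod_cast congrArg Nat.cast e2
        have f3 : (Nat.choose (4*n+2) (n+1) : ℚ) * (4*(n:ℚ)+3)
            = (Nat.choose (4*n+3) (n+1) : ℚ) * (3*(n:ℚ)+2) := by exact_mod_cast congrArg Nat.cast e3
        have f4 : (Nat.choose (4*n+3) (n+1) : ℚ) * (4*(n:ℚ)+4)
            = (Nat.choose (4*n+4) (n+1) : ℚ) * (3*(n:ℚ)+3) := by exact_mod_cast congrArg Nat.cast e4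
        linear_combination (-((4*(n:ℚ)+2)*(4*n+3)*(4*n+4))) * f1
          - (((n:ℚ)+1)*(4*n+3)*(4*n+4)) * f2
          - (((n:ℚ)+1)*(3*n+1)*(4*n+4)) * f3
          - (((n:ℚ)+1)*(3*n+1)*(3*n+2)) * f4
      have hbin' : (3*(n:ℚ)+1)*(3*n+2)*(3*n+3) * (Nat.choose (4*n+4) (n+1) : ℚ)
          = (256*(n:ℚ)^3+384*n^2+176*n+24) * (Nat.choose (4*n) n : ℚ) := by
        apply mul_left_cancel₀ hnen
        linear_combination hbin
      have h := hrec n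
      rw [ih] at h
      have hX1 : (3*(n:ℚ)+1) * ((1:ℚ)/(3*(n:ℚ)+1)) = 1 := by field_simp
      have hX4 : (3*(n:ℚ)+4) * ((1:ℚ)/(3*(n:ℚ)+4)) = 1 := by field_simp
      have h2 : 3*(3*(n:ℚ)+1)*((n:ℚ)+1)*(3*(n:ℚ)+2)*(3*(n:ℚ)+4) * coeff (n+1) A
          = (256*(n:ℚ)^3+384*n^2+176*n+24) * (Nat.choose (4*n) n : ℚ) := by
        linear_combination (3*(n:ℚ)+1) * h
          + ((256*(n:ℚ)^3+384*n^2+176*n+24) * (Nat.choose (4*n) n : ℚ)) * hX1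
      have hkey : (3*(3*(n:ℚ)+1)*((n:ℚ)+1)*(3*(n:ℚ)+2)*(3*(n:ℚ)+4)) * coeff (n+1) A
          = (3*(3*(n:ℚ)+1)*((n:ℚ)+1)*(3*(n:ℚ)+2)*(3*(n:ℚ)+4))
            * (1/(3*(n:ℚ)+4) * (Nat.choose (4*n+4) (n+1) : ℚ)) := by
        linear_combination h2 - hbin'
          - (3*(3*(n:ℚ)+1)*((n:ℚ)+1)*(3*(n:ℚ)+2)*(Nat.choose (4*n+4) (n+1):ℚ)) * hX4
      have hM : (3*(3*(n:ℚ)+1)*((n:ℚ)+1)*(3*(n:ℚ)+2)*(3*(n:ℚ)+4)) ≠ 0 := by positivity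
      have := mul_left_cancel₀ hM hkey
      rw [show 4*(n+1) = 4*n+4 by ring]
      push_cast
      rw [show (3*((n:ℚ)+1)+1) = 3*(n:ℚ)+4 by ring]
      exact_mod_cast this
  -- conclusion
  have key : ∀ n : ℕ, (b (3 * n) : ℚ) = 1 / (3 * (n : ℚ) + 1) * Nat.choose (4 * n) n := by
    intro n
    match n with
    | 0 => norm_num [hb0]
    | (m+1) =>
      have hcoeff : coeff (m+1) A = (b (3 * (m+1)) : ℚ) := by
        rw [hAdef, map_add, hB₀ (m+1) (Nat.succ_le_succ (Nat.zero_le m))]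
        simp
      rw [← hcoeff, hc]
  intro n
  refine ⟨key n, ?_⟩
  rw [key n, kCatalan]
  norm_num
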